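/- Let H be a k-uniform hypergraph with n vertices and m ≥ 1 hyperedges. Then s_Q(H) ≥ (n·(d_max + 1/(k-1)) − km)/(n−1), where d_max is the maximum degree and s_Q(H) is the signless Laplacian spread. -/

import Mathlib

open Finset

/-- The set of hyperedges containing both `i` and `j`. -/
def edgesBetween {n : ℕ} (E : Finset (Finset (Fin n))) (i j : Fin n) :
    Finset (Finset (Fin n)) :=
  E.filter fun e => i ∈ e ∧ j ∈ e

/-- The degree of vertex `i`: the number of hyperedges containing `i`. -/
def hdeg {n : ℕ} (E : Finset (Finset (Fin n))) (i : Fin n) : ℕ :=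
  (E.filter fun e => i ∈ e).card

/-- Two (distinct) vertices are adjacent if some hyperedge contains both. -/
def Adj {n : ℕ} (E : Finset (Finset (Fin n))) (i j : Fin n) : Prop :=
  i ≠ j ∧ ∃ e ∈ E, i ∈ e ∧ j ∈ e

/-- The neighbours of a vertex. -/
noncomputable def neighbors {n : ℕ} (E : Finset (Finset (Fin n))) (i : Fin n) :
    Finset (Fin n) :=
  @Finset.filter _ (fun j => Adj E i j) (Classical.decPred _) Finset.univ

/-- Banerjee's adjacency matrix of a hypergraph: `A i j = ∑_{e ∋ i,j} 1/(|e|-1)`. -/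
noncomputable def adjMat {n : ℕ} (E : Finset (Finset (Fin n))) :
    Matrix (Fin n) (Fin n) ℝ :=
  Matrix.of fun i j =>
    if i = j then 0 else ∑ e ∈ edgesBetween E i j, 1 / ((e.card : ℝ) - 1)

/-- The signless Laplacian matrix `Q = D + A`. -/
noncomputable def signlessLap {n : ℕ} (E : Finset (Finset (Fin n))) :
    Matrix (Fin n) (Fin n) ℝ :=
  Matrix.diagonal (fun i => (hdeg E i : ℝ)) + adjMat E

/-- Largest eigenvalue of a real matrix. -/
noncomputable def qmax {n : ℕ} (M : Matrix (Fin n) (Fin n) ℝ) : ℝ :=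
  sSup (spectrum ℝ M)

/-- Smallest eigenvalue of a real matrix. -/
noncomputable def qmin {n : ℕ} (M : Matrix (Fin n) (Fin n) ℝ) : ℝ :=
  sInf (spectrum ℝ M)

/-- A hypergraph is `k`-uniform if every hyperedge has exactly `k` vertices. -/
def IsUniform {n : ℕ} (k : ℕ) (E : Finset (Finset (Fin n))) : Prop :=
  ∀ e ∈ E, e.card = k

/-- A hypergraph is connected if any two vertices are joined by a walk. -/
def Conn {n : ℕ} (E : Finset (Finset (Fin n))) : Prop :=
  ∀ i j : Fin n, Relation.ReflTransGen (Adj E) i j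

section facts
variable {n k : ℕ} {E : Finset (Finset (Fin n))}

lemma adjMat_eq_sum (hU : ∀ e ∈ E, e.card = k) (i j : Fin n) :
    adjMat E i j = ∑ e ∈ E, if i ∈ e ∧ j ∈ e ∧ i ≠ j then 1/((k:ℝ)-1) else 0 := by
  simp only [adjMat, Matrix.of_apply]
  by_cases h : i = j
  · subst h; simp
  · rw [if_neg h, edgesBetween, Finset.sum_filter]
    apply Finset.sum_congr rfl
    intro e he
    by_cases hij : i ∈ e ∧ j ∈ e
    · rw [if_pos hij, if_pos ⟨hij.1, hij.2, h⟩, hU e he]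
    · rw [if_neg hij, if_neg (by tauto)]

lemma adjMat_symm (i j : Fin n) : adjMat E i j = adjMat E j i := by
  simp only [adjMat, Matrix.of_apply, edgesBetween]
  by_cases h : i = j
  · subst h; rfl
  · rw [if_neg h, if_neg (Ne.symm h)]
    congr 1
    apply Finset.filter_congr
    intro e _; simp [and_comm]

lemma adjMat_nonneg (hk : 2 ≤ k) (hU : ∀ e ∈ E, e.card = k) (i j : Fin n) :
    0 ≤ adjMat E i j := by
  rw [adjMat_eq_sum hU]
  apply Finset.sum_nonneg
  intro e _
  have h1 : (0:ℝ) < (k:ℝ)-1 := by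
    have : (2:ℝ) ≤ k := by exact_mod_cast hk
    linarith
  split
  · positivity
  · exact le_refl _

lemma hk1pos (hk : 2 ≤ k) : (0:ℝ) < (k:ℝ)-1 := by
  have : (2:ℝ) ≤ k := by exact_mod_cast hk
  linarith

lemma adjMat_rowsum (hk : 2 ≤ k) (hU : ∀ e ∈ E, e.card = k) (i : Fin n) :
    ∑ j, adjMat E i j = (hdeg E i : ℝ) := by
  have h1 := hk1pos (k := k) hk
  simp only [adjMat_eq_sum hU]
  rw [Finset.sum_comm]
  have : ∀ e ∈ E, (∑ j, if i ∈ e ∧ j ∈ e ∧ i ≠ j then 1/((k:ℝ)-1) else 0)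
      = if i ∈ e then 1 else 0 := by
    intro e he
    by_cases hi : i ∈ e
    · rw [if_pos hi]
      have : ∀ j : Fin n, (if i ∈ e ∧ j ∈ e ∧ i ≠ j then 1/((k:ℝ)-1) else 0)
          = if j ∈ e.erase i then 1/((k:ℝ)-1) else 0 := by
        intro j
        by_cases hj : j ∈ e.erase i
        · rw [if_pos hj, if_pos ⟨hi, (Finset.mem_erase.1 hj).2, fun h => (Finset.mem_erase.1 hj).1 h.symm⟩]
        · rw [if_neg hj, if_neg]
          intro ⟨_, hje, hij⟩
          exact hj (Finset.mem_erase.2 ⟨fun h => hij h.symm, hje⟩)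
      simp only [this]
      rw [Finset.sum_ite_mem, Finset.univ_inter, Finset.sum_const, Finset.card_erase_of_mem hi, hU e he]
      have hknz : ((k:ℝ)-1) ≠ 0 := ne_of_gt h1
      have : ((k-1 : ℕ) : ℝ) = (k:ℝ) - 1 := by
        have : 1 ≤ k := by omega
        push_cast [this]; ring
      rw [nsmul_eq_mul, this]
      field_simp
    · rw [if_neg hi]
      apply Finset.sum_eq_zero
      intro j _
      rw [if_neg (by tauto)]
  rw [Finset.sum_congr rfl this]
  rw [Finset.sum_boole]
  simp [hdeg, Finset.filter_mem_eq_inter]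

lemma sum_hdeg (hU : ∀ e ∈ E, e.card = k) :
    ∑ i, (hdeg E i : ℝ) = (k : ℝ) * E.card := by
  have : ∀ i : Fin n, (hdeg E i : ℝ) = ∑ e ∈ E, if i ∈ e then (1:ℝ) else 0 := by
    intro i
    rw [Finset.sum_boole]
    simp [hdeg, Finset.filter_mem_eq_inter]
  simp only [this]
  rw [Finset.sum_comm]
  have : ∀ e ∈ E, (∑ i : Fin n, if i ∈ e then (1:ℝ) else 0) = (k:ℝ) := by
    intro e he
    rw [Finset.sum_boole]
    simp [Finset.filter_mem_eq_inter, hU e he]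
  rw [Finset.sum_congr rfl this, Finset.sum_const, nsmul_eq_mul, mul_comm]

lemma signlessLap_isHermitian : (signlessLap E).IsHermitian := by
  rw [Matrix.IsHermitian]
  ext i j
  simp only [Matrix.conjTranspose_apply, signlessLap, Matrix.add_apply, Matrix.diagonal_apply,
    star_trivial]
  rw [adjMat_symm]
  by_cases h : i = j
  · subst h; simp
  · rw [if_neg h, if_neg (Ne.symm h)]

lemma adjMat_eq_zero_of_not_adj {i j : Fin n} (h : j ∉ neighbors E i) :
    adjMat E i j = 0 := by
  unfold neighbors at h
  rw [@Finset.mem_filter _ (fun j => Adj E i j) (Classical.decPred _)] at h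
  simp only [Finset.mem_univ, true_and, Adj, not_and_or] at h
  simp only [adjMat, Matrix.of_apply]
  rcases h with h | h
  · rw [not_not] at h; rw [if_pos h]
  · by_cases hij : i = j
    · rw [if_pos hij]
    · rw [if_neg hij]
      have : edgesBetween E i j = ∅ := by
        rw [Finset.eq_empty_iff_forall_notMem]
        intro e he
        rw [edgesBetween, Finset.mem_filter] at he
        exact h ⟨e, he.1, he.2⟩
      rw [this, Finset.sum_empty]

lemma adjMat_rowsum_neighbors (hk : 2 ≤ k) (hU : ∀ e ∈ E, e.card = k) (i : Fin n) :
    ∑ j ∈ neighbors E i, adjMat E i j = (hdeg E i : ℝ) := by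
  rw [← adjMat_rowsum hk hU i]
  apply Finset.sum_subset (Finset.subset_univ _)
  intro j _ hj
  exact adjMat_eq_zero_of_not_adj hj

lemma card_neighbors_le (hU : ∀ e ∈ E, e.card = k) (i : Fin n) :
    (neighbors E i).card ≤ hdeg E i * (k - 1) := by
  have hsub : neighbors E i ⊆ (E.filter fun e => i ∈ e).biUnion (fun e => e.erase i) := by
    intro j hj
    unfold neighbors at hj
    rw [@Finset.mem_filter _ (fun j => Adj E i j) (Classical.decPred _)] at hj
    simp only [Finset.mem_univ, true_and, Adj] at hj
    obtain ⟨hij, e, he, hie, hje⟩ := hj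
    exact Finset.mem_biUnion.2 ⟨e, Finset.mem_filter.2 ⟨he, hie⟩,
      Finset.mem_erase.2 ⟨fun h => hij h.symm, hje⟩⟩
  calc (neighbors E i).card ≤ _ := Finset.card_le_card hsub
    _ ≤ ∑ e ∈ E.filter (fun e => i ∈ e), (e.erase i).card := Finset.card_biUnion_le
    _ ≤ ∑ e ∈ E.filter (fun e => i ∈ e), (k-1) := by
        apply Finset.sum_le_sum
        intro e he
        rw [Finset.mem_filter] at he
        rw [Finset.card_erase_of_mem he.2, hU e he.1]
    _ = hdeg E i * (k-1) := by rw [Finset.sum_const, smul_eq_mul, hdeg]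

open scoped Matrix in
lemma trace_eq_sum_eigenvalues {m : ℕ} {A : Matrix (Fin m) (Fin m) ℝ} (hA : A.IsHermitian) :
    ∑ i, hA.eigenvalues i = A.trace := by
  have h := hA.spectral_theorem
  have : A.trace = (Matrix.diagonal (RCLike.ofReal ∘ hA.eigenvalues) : Matrix (Fin m) (Fin m) ℝ).trace := by
    conv_lhs => rw [h, Unitary.conjStarAlgAut_apply]
    rw [Matrix.trace_mul_cycle]
    rw [Unitary.coe_star_mul_self, Matrix.one_mul]
  rw [this, Matrix.trace_diagonal]
  rfl

open scoped Matrix in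
lemma rayleigh_le {m : ℕ} {A : Matrix (Fin m) (Fin m) ℝ} (hA : A.IsHermitian) (M : ℝ)
    (hM : ∀ i, hA.eigenvalues i ≤ M) (x : Fin m → ℝ) :
    dotProduct x (A *ᵥ x) ≤ M * dotProduct x x := by
  have h := hA.spectral_theorem
  set U := (Matrix.IsHermitian.eigenvectorUnitary hA : Matrix (Fin m) (Fin m) ℝ) with hU
  set D := (Matrix.diagonal (RCLike.ofReal ∘ hA.eigenvalues) : Matrix (Fin m) (Fin m) ℝ) with hD
  set y := (star U) *ᵥ x with hy
  have hUU : U * star U = 1 := Unitary.coe_mul_star_self _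
  have hAx : A *ᵥ x = U *ᵥ (D *ᵥ y) := by
    rw [hy, Matrix.mulVec_mulVec, Matrix.mulVec_mulVec, h, Unitary.conjStarAlgAut_apply]
  have key : dotProduct x (A *ᵥ x) = dotProduct y (D *ᵥ y) := by
    rw [hAx]
    rw [Matrix.dotProduct_mulVec x U]
    congr 1
    rw [hy, Matrix.star_eq_conjTranspose, Matrix.conjTranspose_eq_transpose_of_trivial,
      Matrix.mulVec_transpose]
  have hT : U.transpose = star U := by
    rw [Matrix.star_eq_conjTranspose, Matrix.conjTranspose_eq_transpose_of_trivial]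
  have hUU' : star U * U = 1 := Unitary.coe_star_mul_self _
  have key2 : dotProduct x x = dotProduct y y := by
    have hyy : U *ᵥ y = x := by
      rw [hy, Matrix.mulVec_mulVec, hUU, Matrix.one_mulVec]
    calc dotProduct x x = dotProduct (U *ᵥ y) (U *ᵥ y) := by rw [hyy]
      _ = dotProduct y y := by
          rw [Matrix.dotProduct_mulVec, ← Matrix.mulVec_transpose, Matrix.mulVec_mulVec, hT,
            hUU', Matrix.one_mulVec]
  rw [key, key2]
  have : dotProduct y (D *ᵥ y) = ∑ i, hA.eigenvalues i * (y i)^2 := by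
    rw [hD, dotProduct, Fintype.sum_congr]
    intro i
    rw [Matrix.mulVec_diagonal]
    simp [RCLike.ofReal]
    ring
  rw [this, dotProduct]
  have : M * ∑ i, y i * y i = ∑ i, M * (y i)^2 := by
    rw [Finset.mul_sum]; apply Finset.sum_congr rfl; intro i _; ring
  rw [this]
  apply Finset.sum_le_sum
  intro i _
  have : (y i)^2 ≥ 0 := sq_nonneg _
  nlinarith [hM i, sq_nonneg (y i)]

lemma not_mem_neighbors_self (u : Fin n) : u ∉ neighbors E u := by
  unfold neighbors
  rw [@Finset.mem_filter _ (fun j => Adj E u j) (Classical.decPred _)]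
  simp [Adj]

lemma adjMat_self (u : Fin n) : adjMat E u u = 0 := by
  simp [adjMat]

open scoped Matrix in
lemma quad_lower (hk : 2 ≤ k) (hU : ∀ e ∈ E, e.card = k) (u : Fin n) (hd : 1 ≤ hdeg E u) :
    ∃ x : Fin n → ℝ, 0 < dotProduct x x ∧
      ((hdeg E u : ℝ) + 1/((k:ℝ)-1)) * dotProduct x x
        ≤ dotProduct x ((signlessLap E) *ᵥ x) := by
  have hkm1 : (0:ℝ) < (k:ℝ) - 1 := hk1pos hk
  set d : ℝ := (hdeg E u : ℝ) with hdd
  have hd1 : (1:ℝ) ≤ d := by rw [hdd]; exact_mod_cast hd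
  set a : ℝ := d * ((k:ℝ) - 1) with ha
  have ha1 : 0 < a := by positivity
  set N := neighbors E u with hN
  have huN : u ∉ N := not_mem_neighbors_self u
  set x : Fin n → ℝ := fun j => if j = u then a else if j ∈ N then 1 else 0 with hx
  have hxu : x u = a := by simp [hx]
  have hxv : ∀ v ∈ N, x v = 1 := by
    intro v hv
    have : v ≠ u := fun h => huN (h ▸ hv)
    simp [hx, this, hv]
  have hx0 : ∀ j, j ∉ insert u N → x j = 0 := by
    intro j hj
    rw [Finset.mem_insert, not_or] at hj
    simp [hx, hj.1, hj.2]
  set I := insert u N with hI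
  -- norm
  have hxx : dotProduct x x = a^2 + (N.card : ℝ) := by
    rw [dotProduct]
    rw [← Finset.sum_subset (Finset.subset_univ I) (fun j _ hj => by rw [hx0 j hj]; ring)]
    rw [hI, Finset.sum_insert huN, hxu]
    have : ∀ v ∈ N, x v * x v = 1 := by intro v hv; rw [hxv v hv]; ring
    rw [Finset.sum_congr rfl this, Finset.sum_const, nsmul_eq_mul]
    ring
  have hxxpos : 0 < dotProduct x x := by
    rw [hxx]; have := pow_pos ha1 2; have := Nat.cast_nonneg (α := ℝ) N.card; linarith
  refine ⟨x, hxxpos, ?_⟩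
  -- split Q
  have hsplit : dotProduct x ((signlessLap E) *ᵥ x)
      = dotProduct x ((Matrix.diagonal (fun i => (hdeg E i : ℝ))) *ᵥ x)
        + dotProduct x ((adjMat E) *ᵥ x) := by
    rw [signlessLap, Matrix.add_mulVec, dotProduct_add]
  -- diagonal part
  have hT1 : dotProduct x ((Matrix.diagonal (fun i => (hdeg E i : ℝ))) *ᵥ x)
      = d * a^2 + ∑ v ∈ N, (hdeg E v : ℝ) := by
    rw [dotProduct]
    simp only [Matrix.mulVec_diagonal]
    rw [← Finset.sum_subset (Finset.subset_univ I) (fun j _ hj => by rw [hx0 j hj]; ring)]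
    rw [hI, Finset.sum_insert huN, hxu]
    have : ∀ v ∈ N, x v * ((hdeg E v : ℝ) * x v) = (hdeg E v : ℝ) := by
      intro v hv; rw [hxv v hv]; ring
    rw [Finset.sum_congr rfl this]
    ring
  -- adjacency row sums restricted at u
  have hrowu : ∑ w ∈ N, adjMat E u w = d := adjMat_rowsum_neighbors hk hU u
  have hrowu' : ∑ v ∈ N, adjMat E v u = d := by
    rw [← hrowu]; apply Finset.sum_congr rfl; intro v _; rw [adjMat_symm]
  -- adjacency part
  set S : ℝ := ∑ v ∈ N, ∑ w ∈ N, adjMat E v w with hS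
  have hT2 : dotProduct x ((adjMat E) *ᵥ x) = 2 * (a * d) + S := by
    have hinner : ∀ i : Fin n, ((adjMat E) *ᵥ x) i
        = adjMat E i u * a + ∑ w ∈ N, adjMat E i w := by
      intro i
      show (∑ j, adjMat E i j * x j) = _
      rw [← Finset.sum_subset (Finset.subset_univ I) (fun j _ hj => by rw [hx0 j hj]; ring)]
      rw [hI, Finset.sum_insert huN, hxu]
      congr 1
      apply Finset.sum_congr rfl
      intro w hw; rw [hxv w hw]; ring
    rw [dotProduct]
    simp only [hinner]
    rw [← Finset.sum_subset (Finset.subset_univ I) (fun j _ hj => by rw [hx0 j hj]; ring)]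
    rw [hI, Finset.sum_insert huN, hxu, adjMat_self, hrowu]
    have : ∀ v ∈ N, x v * (adjMat E v u * a + ∑ w ∈ N, adjMat E v w)
        = adjMat E v u * a + ∑ w ∈ N, adjMat E v w := by
      intro v hv; rw [hxv v hv]; ring
    rw [Finset.sum_congr rfl this, Finset.sum_add_distrib, ← Finset.sum_mul, hrowu', ← hS]
    ring
  -- degree sum bound
  have hdegsum : d + S ≤ ∑ v ∈ N, (hdeg E v : ℝ) := by
    have hv : ∀ v ∈ N, adjMat E v u + ∑ w ∈ N, adjMat E v w ≤ (hdeg E v : ℝ) := by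
      intro v hv
      rw [← adjMat_rowsum hk hU v]
      calc adjMat E v u + ∑ w ∈ N, adjMat E v w = ∑ j ∈ I, adjMat E v j := by
            rw [hI, Finset.sum_insert huN]
        _ ≤ ∑ j, adjMat E v j := by
            apply Finset.sum_le_sum_of_subset_of_nonneg (Finset.subset_univ I)
            intro j _ _
            exact adjMat_nonneg hk hU v j
    calc d + S = ∑ v ∈ N, adjMat E v u + S := by rw [hrowu']
      _ = ∑ v ∈ N, (adjMat E v u + ∑ w ∈ N, adjMat E v w) := by
          rw [hS, Finset.sum_add_distrib]
      _ ≤ ∑ v ∈ N, (hdeg E v : ℝ) := Finset.sum_le_sum hv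
  have hSnn : 0 ≤ S := by
    rw [hS]
    apply Finset.sum_nonneg; intro v _
    apply Finset.sum_nonneg; intro w _
    exact adjMat_nonneg hk hU v w
  -- neighbor count bound
  have hNcard : (N.card : ℝ) ≤ d * ((k:ℝ) - 1) := by
    have := card_neighbors_le (E := E) hU u
    have h2 : ((N.card : ℝ)) ≤ ((hdeg E u * (k-1) : ℕ) : ℝ) := by exact_mod_cast this
    calc (N.card : ℝ) ≤ ((hdeg E u * (k-1) : ℕ) : ℝ) := h2
      _ = d * (((k-1 : ℕ)) : ℝ) := by push_cast; ring
      _ = d * ((k:ℝ) - 1) := by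
          congr 1
          have : 1 ≤ k := by omega
          push_cast [this]; ring
  -- final assembly
  rw [hsplit, hT1, hT2, hxx]
  have hfinal : (d + 1/((k:ℝ)-1)) * (a^2 + d * ((k:ℝ)-1)) = d * a^2 + 2 * (a * d) + d := by
    rw [ha]
    field_simp
    ring
  have hcpos : (0:ℝ) < d + 1/((k:ℝ)-1) := by positivity
  have hstep : (d + 1/((k:ℝ)-1)) * (a^2 + (N.card : ℝ))
      ≤ (d + 1/((k:ℝ)-1)) * (a^2 + d * ((k:ℝ)-1)) := by
    apply mul_le_mul_of_nonneg_left _ (le_of_lt hcpos)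
    linarith
  linarith [hstep, hfinal, hdegsum, hSnn]

end facts

theorem stmt_16 (n k : ℕ) (hn : 2 ≤ n) (hk : 2 ≤ k) (E : Finset (Finset (Fin n)))
    (hU : IsUniform k E) (hm : 1 ≤ E.card) :
    qmax (signlessLap E) - qmin (signlessLap E) ≥
      ((n : ℝ) * ((⨆ i : Fin n, (hdeg E i : ℝ)) + 1 / ((k : ℝ) - 1))
          - (k : ℝ) * E.card) / ((n : ℝ) - 1) := by
  have hnE : Nonempty (Fin n) := ⟨⟨0, by omega⟩⟩
  have hA : (signlessLap E).IsHermitian := signlessLap_isHermitian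
  set μ := hA.eigenvalues with hμ
  -- max degree vertex
  obtain ⟨u, hu⟩ := Finite.exists_max (fun i : Fin n => hdeg E i)
  have hsup : (⨆ i : Fin n, (hdeg E i : ℝ)) = (hdeg E u : ℝ) := by
    apply le_antisymm
    · exact ciSup_le fun i => Nat.cast_le.mpr (hu i)
    · exact le_ciSup (f := fun i : Fin n => (hdeg E i : ℝ)) (Set.Finite.bddAbove (Set.finite_range _)) u
  have hd : 1 ≤ hdeg E u := by
    obtain ⟨e, he⟩ := Finset.card_pos.1 (by omega : 0 < E.card)
    have hek : e.card = k := hU e he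
    obtain ⟨i, hie⟩ := Finset.card_pos.1 (by omega : 0 < e.card)
    have : 1 ≤ hdeg E i := by
      rw [hdeg]
      exact Finset.card_pos.2 ⟨e, Finset.mem_filter.2 ⟨he, hie⟩⟩
    exact le_trans this (hu i)
  -- Rayleigh lower bound for max eigenvalue
  obtain ⟨i₀, hi₀⟩ := Finite.exists_max μ
  obtain ⟨j₀, hj₀⟩ := Finite.exists_min μ
  set c : ℝ := (hdeg E u : ℝ) + 1/((k:ℝ)-1) with hc
  have hcμ : c ≤ μ i₀ := by
    obtain ⟨x, hxpos, hxq⟩ := quad_lower hk hU u hd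
    have hray := rayleigh_le hA (μ i₀) hi₀ x
    have h2 : ((hdeg E u : ℝ) + 1/((k:ℝ)-1)) * dotProduct x x
        ≤ μ i₀ * dotProduct x x := by
      exact le_trans hxq hray
    exact le_of_mul_le_mul_right h2 hxpos
  -- trace identity
  have htr : ∑ i, μ i = (k:ℝ) * E.card := by
    rw [hμ, trace_eq_sum_eigenvalues hA, ← sum_hdeg hU]
    rw [Matrix.trace]
    apply Finset.sum_congr rfl
    intro i _
    simp [Matrix.diag, signlessLap, adjMat_self]
  -- spectrum bounds
  have hfin : (spectrum ℝ (signlessLap E)).Finite := Matrix.finite_real_spectrum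
  have hqmax : μ i₀ ≤ qmax (signlessLap E) :=
    le_csSup hfin.bddAbove (hA.eigenvalues_mem_spectrum_real i₀)
  have hqmin : qmin (signlessLap E) ≤ μ j₀ :=
    csInf_le hfin.bddBelow (hA.eigenvalues_mem_spectrum_real j₀)
  -- sum lower bound
  have hn1 : (0:ℝ) < (n:ℝ) - 1 := by
    have : (2:ℝ) ≤ n := by exact_mod_cast hn
    linarith
  have hsumlb : μ i₀ + ((n:ℝ) - 1) * μ j₀ ≤ (k:ℝ) * E.card := by
    rw [← htr, ← Finset.add_sum_erase Finset.univ μ (Finset.mem_univ i₀)]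
    have h1 : ∑ i ∈ Finset.univ.erase i₀, μ j₀ ≤ ∑ i ∈ Finset.univ.erase i₀, μ i :=
      Finset.sum_le_sum fun i _ => hj₀ i
    have h2 : ∑ i ∈ Finset.univ.erase i₀, μ j₀ = ((n:ℝ) - 1) * μ j₀ := by
      rw [Finset.sum_const, Finset.card_erase_of_mem (Finset.mem_univ i₀), nsmul_eq_mul]
      congr 1
      simp only [Finset.card_univ, Fintype.card_fin]
      have : 1 ≤ n := by omega
      push_cast [this]; ring
    linarith
  -- final
  rw [ge_iff_le, hsup, ← hc, div_le_iff₀ hn1]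
  have hn0 : (0:ℝ) ≤ (n:ℝ) := by positivity
  nlinarith [mul_le_mul_of_nonneg_left hcμ hn0, hqmax, hqmin, hsumlb, hn1.le,
    mul_le_mul_of_nonneg_left (sub_le_sub hqmax hqmin) hn1.le]
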